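/- Let 0 < α < 1. Define on L²_α[0,1] the operators (𝓑₀ f)(s) = f(s) − (2/s²) ∫₀^s f(r) r dr, and for each integer l < 0, (𝓑_l f)(s) = f(s) − 2(1 − l) s^{l−2} ∫₀^s f(r) r^{1−l} dr. Then each of these operators is bounded on L²_α[0,1] with operator norm at most 7. -/

import Mathlib

open MeasureTheory Real Set ENNReal NNReal

lemma sq4 (a b : ℝ≥0∞) : (a + b)^2 ≤ 4 * a^2 + 4 * b^2 := by
  rcases le_total a b with h | h
  · calc (a+b)^2 ≤ (b+b)^2 := by gcongr
    _ = 4 * b^2 := by ring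
    _ ≤ 4*a^2 + 4*b^2 := le_add_self
  · calc (a+b)^2 ≤ (a+a)^2 := by gcongr
    _ = 4 * a^2 := by ring
    _ ≤ 4*a^2 + 4*b^2 := le_self_add

lemma lintegral_sq_le_mul {μ : Measure ℝ} {f g : ℝ → ℝ≥0∞}
    (hf : AEMeasurable f μ) (hg : AEMeasurable g μ) :
    (∫⁻ x, f x * g x ∂μ) ^ 2 ≤ (∫⁻ x, f x ^ 2 ∂μ) * (∫⁻ x, g x ^ 2 ∂μ) := by
  have hpq : Real.HolderConjugate 2 2 := Real.HolderConjugate.two_two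
  have h := ENNReal.lintegral_mul_le_Lp_mul_Lq μ hpq hf hg
  have h2 : ∀ x : ℝ≥0∞, x ^ (2:ℝ) = x ^ 2 := fun x => by
    rw [← ENNReal.rpow_natCast x 2]; norm_num
  calc (∫⁻ x, f x * g x ∂μ) ^ 2
      ≤ ((∫⁻ a, f a ^ (2:ℝ) ∂μ) ^ (1/2:ℝ) * (∫⁻ a, g a ^ (2:ℝ) ∂μ) ^ (1/2:ℝ))^2 := by
        gcongr; exact h
    _ = ((∫⁻ a, f a ^ (2:ℝ) ∂μ) ^ (1/2:ℝ))^2 * ((∫⁻ a, g a ^ (2:ℝ) ∂μ) ^ (1/2:ℝ))^2 := mul_pow _ _ 2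
    _ = (∫⁻ x, f x ^ 2 ∂μ) * (∫⁻ x, g x ^ 2 ∂μ) := by
        rw [← ENNReal.rpow_natCast (_ ^ (1/2:ℝ)) 2, ← ENNReal.rpow_natCast (_ ^ (1/2:ℝ)) 2,
          ← ENNReal.rpow_mul, ← ENNReal.rpow_mul]
        norm_num [h2]

lemma lint_rpow1 {s q : ℝ} (hs : 0 < s) (hq : -1 < q) :
    ∫⁻ r in Ioo (0:ℝ) s, ENNReal.ofReal (r ^ q) = ENNReal.ofReal (s ^ (q+1) / (q+1)) := by
  have hint : IntegrableOn (fun r : ℝ => r ^ q) (Ioo 0 s) := by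
    have := (intervalIntegral.intervalIntegrable_rpow' (a := 0) (b := s) hq)
    exact ((intervalIntegrable_iff_integrableOn_Ioc_of_le hs.le).mp this).mono_set
      Ioo_subset_Ioc_self
  rw [← ofReal_integral_eq_lintegral_ofReal hint
    (((ae_restrict_iff' measurableSet_Ioo).mpr (ae_of_all _ fun r hr =>
      (Real.rpow_pos_of_pos hr.1 q).le)))]
  congr 1
  rw [← integral_Ioc_eq_integral_Ioo, ← intervalIntegral.integral_of_le hs.le,
    integral_rpow (Or.inl hq)]
  rw [Real.zero_rpow (by linarith)]
  ring

lemma lint_rpow2 {r q : ℝ} (hr : 0 < r) (hr1 : r < 1) (hq : q < -1) :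
    ∫⁻ s in Ioo r 1, ENNReal.ofReal (s ^ q) ≤ ENNReal.ofReal (r ^ (q+1) / (-(q+1))) := by
  have h0 : (0:ℝ) ∉ Set.uIcc r (1:ℝ) := notMem_uIcc_of_lt hr zero_lt_one
  have hint : IntegrableOn (fun s : ℝ => s ^ q) (Ioo r 1) := by
    have := intervalIntegral.intervalIntegrable_rpow (μ := volume) (a := r) (b := 1) (r := q) (Or.inr h0)
    exact ((intervalIntegrable_iff_integrableOn_Ioc_of_le hr1.le).mp this).mono_set
      Ioo_subset_Ioc_self
  rw [← ofReal_integral_eq_lintegral_ofReal hint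
    (((ae_restrict_iff' measurableSet_Ioo).mpr (ae_of_all _ fun s hs =>
      (Real.rpow_pos_of_pos (hr.trans hs.1) q).le)))]
  apply ENNReal.ofReal_le_ofReal
  rw [← integral_Ioc_eq_integral_Ioo, ← intervalIntegral.integral_of_le hr1.le,
    integral_rpow (Or.inr ⟨by linarith, h0⟩), Real.one_rpow]
  have heq : (1 - r ^ (q+1)) / (q+1) = (r ^ (q+1) - 1) / (-(q+1)) := by
    rw [← neg_div_neg_eq]; ring_nf
  rw [heq]
  gcongr
  · linarith
  · linarith


lemma swap_lemma {a b : ℝ → ℝ≥0∞} (ha : Measurable a) (hb : Measurable b) :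
    (∫⁻ s in Ioo (0:ℝ) 1, ∫⁻ r in Ioo (0:ℝ) s, a s * b r)
      = ∫⁻ r in Ioo (0:ℝ) 1, (∫⁻ s in Ioo r 1, a s) * b r := by
  set μ := volume.restrict (Ioo (0:ℝ) 1) with hμ
  set h : ℝ × ℝ → ℝ≥0∞ := {q : ℝ × ℝ | q.2 < q.1}.indicator (fun q => a q.1 * b q.2) with hh
  have hmeas : Measurable h :=
    Measurable.indicator ((ha.comp measurable_fst).mul (hb.comp measurable_snd))
      (measurableSet_lt measurable_snd measurable_fst)
  have stepA : ∀ s ∈ Ioo (0:ℝ) 1, (∫⁻ r in Ioo (0:ℝ) s, a s * b r) = ∫⁻ r, h (s, r) ∂μ := by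
    intro s hs
    have h1 : (fun r => h (s, r)) = (Iio s).indicator (fun r => a s * b r) := by
      ext r; simp [hh, Set.indicator_apply, Set.mem_setOf_eq]
    rw [h1, lintegral_indicator measurableSet_Iio, hμ,
      Measure.restrict_restrict measurableSet_Iio]
    have h2 : Iio s ∩ Ioo (0:ℝ) 1 = Ioo 0 s := by
      ext x
      simp only [mem_inter_iff, mem_Iio, mem_Ioo]
      constructor
      · rintro ⟨h1, h2, h3⟩; exact ⟨h2, h1⟩
      · rintro ⟨h1, h2⟩; exact ⟨h2, h1, h2.trans hs.2⟩
    rw [h2]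
  have stepC : ∀ r ∈ Ioo (0:ℝ) 1, (∫⁻ s, h (s, r) ∂μ) = (∫⁻ s in Ioo r 1, a s) * b r := by
    intro r hr
    have h1 : (fun s => h (s, r)) = (Ioi r).indicator (fun s => a s * b r) := by
      ext s; simp [hh, Set.indicator_apply, Set.mem_setOf_eq]
    rw [h1, lintegral_indicator measurableSet_Ioi, hμ,
      Measure.restrict_restrict measurableSet_Ioi]
    have h2 : Ioi r ∩ Ioo (0:ℝ) 1 = Ioo r 1 := by
      ext x
      simp only [mem_inter_iff, mem_Ioi, mem_Ioo]
      constructor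
      · rintro ⟨h1, h2, h3⟩; exact ⟨h1, h3⟩
      · rintro ⟨h1, h2⟩; exact ⟨h1, hr.1.trans h1, h2⟩
    rw [h2, lintegral_mul_const _ ha]
  calc (∫⁻ s in Ioo (0:ℝ) 1, ∫⁻ r in Ioo (0:ℝ) s, a s * b r)
      = ∫⁻ s, ∫⁻ r, h (s, r) ∂μ ∂μ := lintegral_congr_ae
        ((ae_restrict_iff' measurableSet_Ioo).mpr (ae_of_all _ stepA))
    _ = ∫⁻ r, ∫⁻ s, h (s, r) ∂μ ∂μ := lintegral_lintegral_swap hmeas.aemeasurable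
    _ = ∫⁻ r in Ioo (0:ℝ) 1, (∫⁻ s in Ioo r 1, a s) * b r := lintegral_congr_ae
        ((ae_restrict_iff' measurableSet_Ioo).mpr (ae_of_all _ stepC))

lemma meas_rpow (q : ℝ) : Measurable (fun x : ℝ => x ^ q) := by measurability

set_option maxHeartbeats 2000000 in
lemma keyG (α : ℝ) (hα1 : α < 1) (l : ℤ) (hl : l ≤ 0)
    (f : ℝ → ℂ) (hf : Measurable f) :
    (∫⁻ s in Ioo (0:ℝ) 1,
      (ENNReal.ofReal (2*(1-(l:ℝ)) * s ^ ((l:ℝ) - 2)) *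
        ∫⁻ r in Ioo (0:ℝ) s, ENNReal.ofReal (r ^ (1 - (l:ℝ))) * (‖f r‖₊:ℝ≥0∞))^2
        * ENNReal.ofReal ((1 - s^2) ^ (1-α) * s))
      ≤ 6 * ∫⁻ r in Ioo (0:ℝ) 1, (‖f r‖₊:ℝ≥0∞)^2 * ENNReal.ofReal ((1 - r^2) ^ (1-α) * r) := by
  have hl' : (l:ℝ) ≤ 0 := by exact_mod_cast hl
  set c : ℝ := 2*(1-(l:ℝ)) with hc_def
  have hc : 0 < c := by simp only [hc_def]; linarith
  set F : ℝ → ℝ≥0∞ := fun r => (‖f r‖₊ : ℝ≥0∞) with hF_def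
  have hFmeas : Measurable F := hf.nnnorm.coe_nnreal_ennreal
  set R : ℝ → ℝ := fun r => r ^ (1 - (l:ℝ)) with hR_def
  set u : ℝ → ℝ := fun r => (1-r^2) ^ (α-1) * r ^ (-(1/2) : ℝ) with hu_def
  set v : ℝ → ℝ := fun r => (1-r^2) ^ (1-α) * r ^ ((1/2) : ℝ) with hv_def
  set q : ℝ := 1/2 - (l:ℝ) with hq_def
  set K : ℝ := q + 1 with hK_def
  have hK : 0 < K := by simp only [hK_def, hq_def]; linarith
  set D : ℝ := c^2 / K with hD_def
  have hD : 0 ≤ D := by positivity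
  set M : ℝ := -(((l:ℝ) - 3/2) + 1) with hM_def
  have hM : 0 < M := by simp only [hM_def]; linarith
  -- measurability of kernels
  have hRmeas : Measurable R := meas_rpow _
  have humeas : Measurable u :=
    ((meas_rpow (α-1)).comp (measurable_const.sub (measurable_id.pow_const 2))).mul
      (meas_rpow _)
  have hvmeas : Measurable v :=
    ((meas_rpow (1-α)).comp (measurable_const.sub (measurable_id.pow_const 2))).mul
      (meas_rpow _)
  set A : ℝ → ℝ≥0∞ := fun s => ENNReal.ofReal (s ^ ((l:ℝ) - 3/2)) with hA_def
  set Bf : ℝ → ℝ≥0∞ := fun r => ENNReal.ofReal (D * (R r * v r)) * F r ^ 2 with hBf_def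
  have hAmeas : Measurable A := (meas_rpow _).ennreal_ofReal
  have hBfmeas : Measurable Bf :=
    ((measurable_const.mul (hRmeas.mul hvmeas)).ennreal_ofReal).mul (hFmeas.pow_const 2)
  -- pointwise (in s) bound
  have step1 : ∀ s ∈ Ioo (0:ℝ) 1,
      (ENNReal.ofReal (c * s ^ ((l:ℝ) - 2)) *
        ∫⁻ r in Ioo (0:ℝ) s, ENNReal.ofReal (R r) * F r)^2
        * ENNReal.ofReal ((1 - s^2) ^ (1-α) * s)
      ≤ ∫⁻ r in Ioo (0:ℝ) s, A s * Bf r := by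
    intro s hs
    obtain ⟨hs0, hs1⟩ := hs
    have hs2 : 0 < 1 - s^2 := by nlinarith
    set φ : ℝ → ℝ≥0∞ := fun r => ENNReal.ofReal (Real.sqrt (R r * u r)) with hφ_def
    set ψ : ℝ → ℝ≥0∞ := fun r => ENNReal.ofReal (Real.sqrt (R r * v r)) * F r with hψ_def
    have hφmeas : Measurable φ :=
      (Real.continuous_sqrt.measurable.comp (hRmeas.mul humeas)).ennreal_ofReal
    have hψmeas : Measurable ψ :=
      ((Real.continuous_sqrt.measurable.comp (hRmeas.mul hvmeas)).ennreal_ofReal).mul hFmeas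
    have hIs : (∫⁻ r in Ioo (0:ℝ) s, ENNReal.ofReal (R r) * F r)
        = ∫⁻ r in Ioo (0:ℝ) s, φ r * ψ r := by
      refine setLIntegral_congr_fun measurableSet_Ioo (fun r hr => ?_)
      have hr0 : 0 < r := hr.1
      have hr1 : r < 1 := hr.2.trans hs1
      have hr2 : 0 < 1 - r^2 := by nlinarith
      have hR0 : 0 ≤ R r := Real.rpow_nonneg hr0.le _
      have hu0 : 0 ≤ u r := mul_nonneg (Real.rpow_nonneg hr2.le _) (Real.rpow_nonneg hr0.le _)
      have huv : u r * v r = 1 := by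
        simp only [hu_def, hv_def]
        rw [show (1-r^2) ^ (α-1) * r ^ (-(1/2):ℝ) * ((1-r^2) ^ (1-α) * r ^ ((1/2):ℝ))
            = ((1-r^2) ^ (α-1) * (1-r^2) ^ (1-α)) * (r ^ (-(1/2):ℝ) * r ^ ((1/2):ℝ)) from by
              ring,
          ← Real.rpow_add hr2, ← Real.rpow_add hr0]
        norm_num
      have hsq : Real.sqrt (R r * u r) * Real.sqrt (R r * v r) = R r := by
        rw [← Real.sqrt_mul (mul_nonneg hR0 hu0),
          show R r * u r * (R r * v r) = (R r * R r) * (u r * v r) from by ring, huv, mul_one,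
          Real.sqrt_mul_self hR0]
      simp only [hφ_def, hψ_def]
      rw [← mul_assoc, ← ENNReal.ofReal_mul (Real.sqrt_nonneg _), hsq]
    have hCS : (∫⁻ r in Ioo (0:ℝ) s, ENNReal.ofReal (R r) * F r) ^ 2
        ≤ (∫⁻ r in Ioo (0:ℝ) s, ENNReal.ofReal (R r * u r))
          * (∫⁻ r in Ioo (0:ℝ) s, ENNReal.ofReal (R r * v r) * F r ^ 2) := by
      rw [hIs]
      refine (lintegral_sq_le_mul hφmeas.aemeasurable hψmeas.aemeasurable).trans ?_
      apply mul_le_mul'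
      · refine le_of_eq (setLIntegral_congr_fun measurableSet_Ioo (fun r hr => ?_))
        have hr2 : 0 < 1 - r^2 := by nlinarith [hr.1, hr.2.trans hs1, hr.2, hr.1.le]
        have h0 : 0 ≤ R r * u r := mul_nonneg (Real.rpow_nonneg hr.1.le _)
          (mul_nonneg (Real.rpow_nonneg hr2.le _) (Real.rpow_nonneg hr.1.le _))
        simp only [hφ_def]
        rw [← ENNReal.ofReal_pow (Real.sqrt_nonneg _), pow_two, Real.mul_self_sqrt h0]
      · refine le_of_eq (setLIntegral_congr_fun measurableSet_Ioo (fun r hr => ?_))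
        have hr2 : 0 < 1 - r^2 := by nlinarith [hr.1, hr.2.trans hs1]
        have h0 : 0 ≤ R r * v r := mul_nonneg (Real.rpow_nonneg hr.1.le _)
          (mul_nonneg (Real.rpow_nonneg hr2.le _) (Real.rpow_nonneg hr.1.le _))
        simp only [hψ_def]
        rw [mul_pow, ← ENNReal.ofReal_pow (Real.sqrt_nonneg _), pow_two, Real.mul_self_sqrt h0]
    have hA1 : (∫⁻ r in Ioo (0:ℝ) s, ENNReal.ofReal (R r * u r))
        ≤ ENNReal.ofReal ((1-s^2)^(α-1)) * ENNReal.ofReal (s ^ (q+1) / (q+1)) := by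
      have hmono : ∀ r ∈ Ioo (0:ℝ) s, ENNReal.ofReal (R r * u r)
          ≤ ENNReal.ofReal ((1-s^2)^(α-1)) * ENNReal.ofReal (r ^ q) := by
        intro r hr
        have hr0 : 0 < r := hr.1
        have hr1 : r < 1 := hr.2.trans hs1
        have hr2 : 0 < 1 - r^2 := by nlinarith
        rw [← ENNReal.ofReal_mul (Real.rpow_nonneg hs2.le _)]
        apply ENNReal.ofReal_le_ofReal
        have hre : R r * u r = (1-r^2)^(α-1) * r ^ q := by
          simp only [hR_def, hu_def]
          rw [show q = (1 - (l:ℝ)) + (-(1/2):ℝ) from by rw [hq_def]; ring,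
            Real.rpow_add hr0]
          ring
        rw [hre]
        apply mul_le_mul_of_nonneg_right _ (Real.rpow_nonneg hr0.le _)
        exact Real.rpow_le_rpow_of_nonpos hs2 (by nlinarith [hr.1, hr.2]) (by linarith)
      calc (∫⁻ r in Ioo (0:ℝ) s, ENNReal.ofReal (R r * u r))
          ≤ ∫⁻ r in Ioo (0:ℝ) s,
              ENNReal.ofReal ((1-s^2)^(α-1)) * ENNReal.ofReal (r ^ q) :=
            setLIntegral_mono (measurable_const.mul ((meas_rpow q).ennreal_ofReal)) hmono
        _ = ENNReal.ofReal ((1-s^2)^(α-1)) * ∫⁻ r in Ioo (0:ℝ) s, ENNReal.ofReal (r ^ q) :=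
            lintegral_const_mul' _ _ ENNReal.ofReal_ne_top
        _ = _ := by rw [lint_rpow1 hs0 (by rw [hq_def]; linarith)]
    set treal : ℝ := (c * s ^ ((l:ℝ)-2))^2 *
        ((1-s^2)^(α-1) * (s^(q+1)/(q+1))) * ((1-s^2)^(1-α) * s) with htreal_def
    have hCs0 : 0 ≤ c * s ^ ((l:ℝ)-2) := mul_nonneg hc.le (Real.rpow_nonneg hs0.le _)
    have hp0 : 0 ≤ (1-s^2:ℝ)^(α-1) := Real.rpow_nonneg hs2.le _
    have hy0 : 0 ≤ s^(q+1)/(q+1) := div_nonneg (Real.rpow_nonneg hs0.le _) (by rw [hK_def] at hK; linarith)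
    have hw0 : 0 ≤ (1-s^2:ℝ)^(1-α) * s := mul_nonneg (Real.rpow_nonneg hs2.le _) hs0.le
    have htreal0 : 0 ≤ treal := by
      rw [htreal_def]
      exact mul_nonneg (mul_nonneg (pow_nonneg hCs0 2) (mul_nonneg hp0 hy0)) hw0
    have hS : ENNReal.ofReal (c * s ^ ((l:ℝ)-2))^2 *
        (ENNReal.ofReal ((1-s^2)^(α-1)) * ENNReal.ofReal (s^(q+1)/(q+1))) *
        ENNReal.ofReal ((1-s^2)^(1-α) * s) = ENNReal.ofReal treal := by
      rw [← ENNReal.ofReal_pow hCs0, ← ENNReal.ofReal_mul hp0, ← ENNReal.ofReal_mul (pow_nonneg hCs0 2),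
        ← ENNReal.ofReal_mul (mul_nonneg (pow_nonneg hCs0 2) (mul_nonneg hp0 hy0)), htreal_def]
    have htreal : treal = s ^ ((l:ℝ)-3/2) * D := by
      have p2 : (1-s^2:ℝ)^(α-1) * (1-s^2)^(1-α) = 1 := by
        rw [← Real.rpow_add hs2]; norm_num
      have p1 : s ^ ((l:ℝ)-2) * s ^ ((l:ℝ)-2) * (s ^ (q+1) * s) = s ^ ((l:ℝ) - 3/2) := by
        have e1 : s ^ ((l:ℝ)-2) * s ^ ((l:ℝ)-2) = s ^ (((l:ℝ)-2) + ((l:ℝ)-2)) :=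
          (Real.rpow_add hs0 _ _).symm
        have e2 : s ^ ((q+1)+1) = s ^ (q+1) * s := by
          rw [Real.rpow_add hs0 (q+1) 1, Real.rpow_one]
        rw [e1, ← e2, ← Real.rpow_add hs0]
        congr 1
        rw [hq_def]; ring
      have expand : treal = c^2/(q+1) * (s ^ ((l:ℝ)-2) * s ^ ((l:ℝ)-2) * (s ^ (q+1) * s)) *
          ((1-s^2)^(α-1) * (1-s^2)^(1-α)) := by rw [htreal_def]; ring
      rw [expand, p1, p2, mul_one, hD_def, hK_def]
      ring
    have hstep : ENNReal.ofReal treal *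
        (∫⁻ r in Ioo (0:ℝ) s, ENNReal.ofReal (R r * v r) * F r ^ 2)
        = ∫⁻ r in Ioo (0:ℝ) s, A s * Bf r := by
      rw [← lintegral_const_mul' _ _ ENNReal.ofReal_ne_top]
      refine setLIntegral_congr_fun measurableSet_Ioo (fun r hr => ?_)
      have hr2 : 0 < 1 - r^2 := by nlinarith [hr.1, hr.2.trans hs1]
      have hRv : 0 ≤ R r * v r := mul_nonneg (Real.rpow_nonneg hr.1.le _)
        (mul_nonneg (Real.rpow_nonneg hr2.le _) (Real.rpow_nonneg hr.1.le _))
      calc ENNReal.ofReal treal * (ENNReal.ofReal (R r * v r) * F r ^ 2)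
          = ENNReal.ofReal (treal * (R r * v r)) * F r ^ 2 := by
            rw [← mul_assoc, ← ENNReal.ofReal_mul htreal0]
        _ = ENNReal.ofReal (s ^ ((l:ℝ)-3/2) * (D * (R r * v r))) * F r ^ 2 := by
            rw [show treal * (R r * v r) = s ^ ((l:ℝ)-3/2) * (D * (R r * v r)) from by
              rw [htreal]; ring]
        _ = A s * Bf r := by
            simp only [hA_def, hBf_def]
            rw [ENNReal.ofReal_mul (Real.rpow_nonneg hs0.le _), mul_assoc]
    calc (ENNReal.ofReal (c * s ^ ((l:ℝ) - 2)) *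
          ∫⁻ r in Ioo (0:ℝ) s, ENNReal.ofReal (R r) * F r)^2
          * ENNReal.ofReal ((1 - s^2) ^ (1-α) * s)
        = ENNReal.ofReal (c * s ^ ((l:ℝ) - 2))^2 *
            (∫⁻ r in Ioo (0:ℝ) s, ENNReal.ofReal (R r) * F r)^2
            * ENNReal.ofReal ((1 - s^2) ^ (1-α) * s) := by rw [mul_pow]
      _ ≤ ENNReal.ofReal (c * s ^ ((l:ℝ) - 2))^2 *
            ((ENNReal.ofReal ((1-s^2)^(α-1)) * ENNReal.ofReal (s^(q+1)/(q+1))) *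
              (∫⁻ r in Ioo (0:ℝ) s, ENNReal.ofReal (R r * v r) * F r ^ 2))
            * ENNReal.ofReal ((1 - s^2) ^ (1-α) * s) := by
          gcongr
          exact hCS.trans (mul_le_mul_left hA1 _)
      _ = (ENNReal.ofReal (c * s ^ ((l:ℝ) - 2))^2 *
            (ENNReal.ofReal ((1-s^2)^(α-1)) * ENNReal.ofReal (s^(q+1)/(q+1))) *
            ENNReal.ofReal ((1 - s^2) ^ (1-α) * s)) *
            (∫⁻ r in Ioo (0:ℝ) s, ENNReal.ofReal (R r * v r) * F r ^ 2) := by ring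
      _ = ENNReal.ofReal treal *
            (∫⁻ r in Ioo (0:ℝ) s, ENNReal.ofReal (R r * v r) * F r ^ 2) := by rw [hS]
      _ = ∫⁻ r in Ioo (0:ℝ) s, A s * Bf r := hstep
  -- now integrate in s, swap, and integrate in r
  have hDM : D / M ≤ 6 := by
    have hKM : 0 < K * M := mul_pos hK hM
    rw [hD_def, div_div, div_le_iff₀ hKM]
    rw [hK_def, hq_def, hM_def, hc_def]
    nlinarith [sq_nonneg ((l:ℝ)), hl']
  have step_r : ∀ r ∈ Ioo (0:ℝ) 1, (∫⁻ s in Ioo r 1, A s) * Bf r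
      ≤ ENNReal.ofReal 6 * (F r ^ 2 * ENNReal.ofReal ((1 - r^2) ^ (1-α) * r)) := by
    intro r hr
    obtain ⟨hr0, hr1⟩ := hr
    have hr2 : 0 < 1 - r^2 := by nlinarith
    have h1 : (∫⁻ s in Ioo r 1, A s) ≤ ENNReal.ofReal (r ^ (((l:ℝ)-3/2)+1) / M) := by
      simp only [hA_def]
      rw [hM_def]
      exact lint_rpow2 hr0 hr1 (by linarith)
    have hreal : (r ^ (((l:ℝ)-3/2)+1) / M) * (D * (R r * v r))
        ≤ 6 * ((1-r^2)^(1-α) * r) := by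
      have pr : r ^ (((l:ℝ)-3/2)+1) * (r ^ (1-(l:ℝ)) * r ^ ((1/2):ℝ)) = r := by
        rw [← Real.rpow_add hr0, ← Real.rpow_add hr0,
          show ((l:ℝ)-3/2+1) + ((1-(l:ℝ)) + 1/2) = 1 from by ring, Real.rpow_one]
      calc (r ^ (((l:ℝ)-3/2)+1) / M) * (D * (R r * v r))
          = (D / M) * ((1-r^2)^(1-α) *
              (r ^ (((l:ℝ)-3/2)+1) * (r ^ (1-(l:ℝ)) * r ^ ((1/2):ℝ)))) := by
            simp only [hR_def, hv_def]; ring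
        _ = (D/M) * ((1-r^2)^(1-α) * r) := by rw [pr]
        _ ≤ 6 * ((1-r^2)^(1-α) * r) :=
            mul_le_mul_of_nonneg_right hDM
              (mul_nonneg (Real.rpow_nonneg hr2.le _) hr0.le)
    calc (∫⁻ s in Ioo r 1, A s) * Bf r
        ≤ ENNReal.ofReal (r ^ (((l:ℝ)-3/2)+1) / M) * Bf r := mul_le_mul_left h1 _
      _ = ENNReal.ofReal ((r ^ (((l:ℝ)-3/2)+1) / M) * (D * (R r * v r))) * F r ^ 2 := by
          simp only [hBf_def]
          rw [← mul_assoc, ← ENNReal.ofReal_mul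
            (div_nonneg (Real.rpow_nonneg hr0.le _) hM.le)]
      _ ≤ ENNReal.ofReal (6 * ((1-r^2)^(1-α) * r)) * F r ^ 2 :=
          mul_le_mul_left (ENNReal.ofReal_le_ofReal hreal) _
      _ = ENNReal.ofReal 6 * (F r ^ 2 * ENNReal.ofReal ((1 - r^2) ^ (1-α) * r)) := by
          rw [ENNReal.ofReal_mul (by norm_num)]; ring
  calc (∫⁻ s in Ioo (0:ℝ) 1,
        (ENNReal.ofReal (c * s ^ ((l:ℝ) - 2)) *
          ∫⁻ r in Ioo (0:ℝ) s, ENNReal.ofReal (r ^ (1 - (l:ℝ))) * F r)^2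
        * ENNReal.ofReal ((1 - s^2) ^ (1-α) * s))
      ≤ ∫⁻ s in Ioo (0:ℝ) 1, ∫⁻ r in Ioo (0:ℝ) s, A s * Bf r :=
        setLIntegral_mono' measurableSet_Ioo step1
    _ = ∫⁻ r in Ioo (0:ℝ) 1, (∫⁻ s in Ioo r 1, A s) * Bf r := swap_lemma hAmeas hBfmeas
    _ ≤ ∫⁻ r in Ioo (0:ℝ) 1,
          ENNReal.ofReal 6 * (F r ^ 2 * ENNReal.ofReal ((1 - r^2) ^ (1-α) * r)) :=
        setLIntegral_mono' measurableSet_Ioo step_r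
    _ = 6 * ∫⁻ r in Ioo (0:ℝ) 1, F r ^ 2 * ENNReal.ofReal ((1 - r^2) ^ (1-α) * r) := by
        rw [lintegral_const_mul' _ _ ENNReal.ofReal_ne_top]
        norm_num


/-- `(𝓑₀ f)(s) = f(s) - (2/s²) ∫₀^s f(r) r dr`. -/
noncomputable def B0 (f : ℝ → ℂ) (s : ℝ) : ℂ :=
  f s - ((2 / s^2 : ℝ) : ℂ) * ∫ r in Ioo (0:ℝ) s, ((r : ℝ) : ℂ) * f r

/-- `(𝓑_l f)(s) = f(s) - 2(1-l) s^{l-2} ∫₀^s f(r) r^{1-l} dr` for `l < 0`. -/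
noncomputable def Bl (l : ℤ) (f : ℝ → ℂ) (s : ℝ) : ℂ :=
  f s - ((2 * (1 - (l : ℝ)) * s ^ (l - 2) : ℝ) : ℂ) *
      ∫ r in Ioo (0:ℝ) s, ((r ^ (1 - l) : ℝ) : ℂ) * f r

lemma B0_eq_Bl0 (f : ℝ → ℂ) (s : ℝ) : B0 f s = Bl 0 f s := by
  unfold B0 Bl
  norm_num
  left
  push_cast
  rw [div_eq_mul_inv]

lemma nnBl (l : ℤ) (hl : l ≤ 0) (f : ℝ → ℂ) {s : ℝ} (hs : s ∈ Ioo (0:ℝ) 1) :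
    (‖Bl l f s‖₊ : ℝ≥0∞) ≤ (‖f s‖₊ : ℝ≥0∞) +
      ENNReal.ofReal (2*(1-(l:ℝ)) * s ^ ((l:ℝ) - 2)) *
        ∫⁻ r in Ioo (0:ℝ) s, ENNReal.ofReal (r ^ (1 - (l:ℝ))) * (‖f r‖₊:ℝ≥0∞) := by
  have hs0 : 0 < s := hs.1
  have hl' : (l:ℝ) ≤ 0 := by exact_mod_cast hl
  have hzp : (0:ℝ) < s ^ (l - 2 : ℤ) := zpow_pos hs0 _
  have hC0 : 0 ≤ 2*(1-(l:ℝ)) * s ^ (l - 2 : ℤ) := by nlinarith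
  have hCeq : 2*(1-(l:ℝ)) * s ^ (l - 2 : ℤ) = 2*(1-(l:ℝ)) * s ^ ((l:ℝ) - 2) := by
    rw [← Real.rpow_intCast s (l-2)]
    push_cast
    ring_nf
  calc (‖Bl l f s‖₊ : ℝ≥0∞)
      ≤ (‖f s‖₊ : ℝ≥0∞) + (‖((2 * (1 - (l : ℝ)) * s ^ (l - 2) : ℝ) : ℂ) *
          ∫ r in Ioo (0:ℝ) s, ((r ^ (1 - l) : ℝ) : ℂ) * f r‖₊ : ℝ≥0∞) := by
        rw [Bl]
        exact_mod_cast nnnorm_sub_le _ _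
    _ ≤ (‖f s‖₊ : ℝ≥0∞) +
        ENNReal.ofReal (2*(1-(l:ℝ)) * s ^ ((l:ℝ) - 2)) *
          ∫⁻ r in Ioo (0:ℝ) s, ENNReal.ofReal (r ^ (1 - (l:ℝ))) * (‖f r‖₊:ℝ≥0∞) := by
        gcongr
        rw [nnnorm_mul, ENNReal.coe_mul, Complex.nnnorm_real,
          ← enorm_eq_nnnorm, Real.enorm_eq_ofReal hC0, hCeq]
        gcongr
        refine le_trans (enorm_integral_le_lintegral_enorm _) (le_of_eq ?_)
        refine setLIntegral_congr_fun measurableSet_Ioo (fun r hr => ?_)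
        rw [enorm_eq_nnnorm, nnnorm_mul, ENNReal.coe_mul, Complex.nnnorm_real,
          ← enorm_eq_nnnorm, Real.enorm_eq_ofReal (zpow_nonneg hr.1.le _)]
        congr 1
        rw [← Real.rpow_intCast r (1-l)]
        push_cast
        ring_nf


set_option maxHeartbeats 2000000 in
theorem stmt13 (α : ℝ) (hα0 : 0 < α) (hα1 : α < 1) :
    (∀ f : ℝ → ℂ, Measurable f →
      (∫⁻ r in Ioo (0:ℝ) 1,
          (‖f r‖₊ : ℝ≥0∞)^2 * ENNReal.ofReal ((1 - r^2) ^ (1 - α) * r)) < ⊤ →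
      ∫⁻ s in Ioo (0:ℝ) 1,
          (‖B0 f s‖₊ : ℝ≥0∞)^2 * ENNReal.ofReal ((1 - s^2) ^ (1 - α) * s)
        ≤ ENNReal.ofReal (7^2) *
          ∫⁻ r in Ioo (0:ℝ) 1,
            (‖f r‖₊ : ℝ≥0∞)^2 * ENNReal.ofReal ((1 - r^2) ^ (1 - α) * r)) ∧
    (∀ l : ℤ, l < 0 → ∀ f : ℝ → ℂ, Measurable f →
      (∫⁻ r in Ioo (0:ℝ) 1,
          (‖f r‖₊ : ℝ≥0∞)^2 * ENNReal.ofReal ((1 - r^2) ^ (1 - α) * r)) < ⊤ →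
      ∫⁻ s in Ioo (0:ℝ) 1,
          (‖Bl l f s‖₊ : ℝ≥0∞)^2 * ENNReal.ofReal ((1 - s^2) ^ (1 - α) * s)
        ≤ ENNReal.ofReal (7^2) *
          ∫⁻ r in Ioo (0:ℝ) 1,
            (‖f r‖₊ : ℝ≥0∞)^2 * ENNReal.ofReal ((1 - r^2) ^ (1 - α) * r)) := by
  have main : ∀ l : ℤ, l ≤ 0 → ∀ f : ℝ → ℂ, Measurable f →
      ∫⁻ s in Ioo (0:ℝ) 1,
          (‖Bl l f s‖₊ : ℝ≥0∞)^2 * ENNReal.ofReal ((1 - s^2) ^ (1 - α) * s)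
        ≤ ENNReal.ofReal (7^2) *
          ∫⁻ r in Ioo (0:ℝ) 1,
            (‖f r‖₊ : ℝ≥0∞)^2 * ENNReal.ofReal ((1 - r^2) ^ (1 - α) * r) := by
    intro l hl f hf
    have hwmeas : Measurable (fun s : ℝ => ENNReal.ofReal ((1 - s^2) ^ (1-α) * s)) :=
      (((meas_rpow (1-α)).comp (measurable_const.sub (measurable_id.pow_const 2))).mul
        measurable_id).ennreal_ofReal
    have hFw : Measurable (fun s : ℝ =>
        (4:ℝ≥0∞) * ((‖f s‖₊:ℝ≥0∞)^2 * ENNReal.ofReal ((1 - s^2) ^ (1-α) * s))) :=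
      measurable_const.mul ((hf.nnnorm.coe_nnreal_ennreal.pow_const 2).mul hwmeas)
    calc ∫⁻ s in Ioo (0:ℝ) 1,
          (‖Bl l f s‖₊ : ℝ≥0∞)^2 * ENNReal.ofReal ((1 - s^2) ^ (1 - α) * s)
        ≤ ∫⁻ s in Ioo (0:ℝ) 1,
            (4 * ((‖f s‖₊:ℝ≥0∞)^2 * ENNReal.ofReal ((1 - s^2) ^ (1-α) * s)) +
             4 * ((ENNReal.ofReal (2*(1-(l:ℝ)) * s ^ ((l:ℝ) - 2)) *
                ∫⁻ r in Ioo (0:ℝ) s, ENNReal.ofReal (r ^ (1 - (l:ℝ))) * (‖f r‖₊:ℝ≥0∞))^2 *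
                ENNReal.ofReal ((1 - s^2) ^ (1-α) * s))) := by
          refine setLIntegral_mono' measurableSet_Ioo (fun s hs => ?_)
          have h1 := nnBl l hl f hs
          calc (‖Bl l f s‖₊ : ℝ≥0∞)^2 * ENNReal.ofReal ((1 - s^2) ^ (1 - α) * s)
              ≤ ((‖f s‖₊:ℝ≥0∞) + ENNReal.ofReal (2*(1-(l:ℝ)) * s ^ ((l:ℝ) - 2)) *
                  ∫⁻ r in Ioo (0:ℝ) s, ENNReal.ofReal (r ^ (1 - (l:ℝ))) * (‖f r‖₊:ℝ≥0∞))^2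
                  * ENNReal.ofReal ((1 - s^2) ^ (1 - α) * s) :=
                mul_le_mul_left (pow_le_pow_left₀ zero_le h1 2) _
            _ ≤ _ := le_trans (mul_le_mul_left (sq4 _ _) _) (le_of_eq (by ring))
      _ = (∫⁻ s in Ioo (0:ℝ) 1,
            4 * ((‖f s‖₊:ℝ≥0∞)^2 * ENNReal.ofReal ((1 - s^2) ^ (1-α) * s))) +
          ∫⁻ s in Ioo (0:ℝ) 1,
            4 * ((ENNReal.ofReal (2*(1-(l:ℝ)) * s ^ ((l:ℝ) - 2)) *
                ∫⁻ r in Ioo (0:ℝ) s, ENNReal.ofReal (r ^ (1 - (l:ℝ))) * (‖f r‖₊:ℝ≥0∞))^2 *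
                ENNReal.ofReal ((1 - s^2) ^ (1-α) * s)) := lintegral_add_left hFw _
      _ = 4 * (∫⁻ r in Ioo (0:ℝ) 1,
            (‖f r‖₊ : ℝ≥0∞)^2 * ENNReal.ofReal ((1 - r^2) ^ (1 - α) * r)) +
          4 * ∫⁻ s in Ioo (0:ℝ) 1,
            (ENNReal.ofReal (2*(1-(l:ℝ)) * s ^ ((l:ℝ) - 2)) *
                ∫⁻ r in Ioo (0:ℝ) s, ENNReal.ofReal (r ^ (1 - (l:ℝ))) * (‖f r‖₊:ℝ≥0∞))^2 *
                ENNReal.ofReal ((1 - s^2) ^ (1-α) * s) := by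
          rw [lintegral_const_mul' _ _ (by norm_num), lintegral_const_mul' _ _ (by norm_num)]
      _ ≤ 4 * (∫⁻ r in Ioo (0:ℝ) 1,
            (‖f r‖₊ : ℝ≥0∞)^2 * ENNReal.ofReal ((1 - r^2) ^ (1 - α) * r)) +
          4 * (6 * ∫⁻ r in Ioo (0:ℝ) 1,
            (‖f r‖₊ : ℝ≥0∞)^2 * ENNReal.ofReal ((1 - r^2) ^ (1 - α) * r)) := by
          gcongr
          exact keyG α hα1 l hl f hf
      _ ≤ ENNReal.ofReal (7^2) *
          ∫⁻ r in Ioo (0:ℝ) 1,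
            (‖f r‖₊ : ℝ≥0∞)^2 * ENNReal.ofReal ((1 - r^2) ^ (1 - α) * r) := by
          have h49 : ENNReal.ofReal ((7:ℝ)^2) = 49 := by norm_num
          rw [h49]
          refine le_trans (le_of_eq (by ring)) (mul_le_mul_left
            (by norm_num : (28:ℝ≥0∞) ≤ 49) _)
  constructor
  · intro f hf hfin
    have hB : ∀ s : ℝ, B0 f s = Bl 0 f s := B0_eq_Bl0 f
    simp only [hB]
    exact main 0 le_rfl f hf
  · intro l hl f hf hfin
    exact main l hl.le f hf
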